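/- Let c > 0, 0 < μ ≤ π/(2c), ω_c ∈ ℝ, ε ∈ ℝ with |ω_c * ε| + μ * c ≤ π/2. Suppose t_n = n * T_s + ε_n with |ε_n| ≤ ε, and ω_c = k * (2π/T_s) for a positive integer k and T_s > 0. If x, y ∈ [-c, c] satisfy sin(ω_c * t_n + μ x) = sin(ω_c * t_n + μ y) for this sample instant, then x = y. -/
import Mathlib


theorem pm_jitter_unique (c μ ωc ε Ts tn εn : ℝ) (k n : ℤ)
    (hc : 0 < c) (hμ : 0 < μ) (hμc : μ ≤ Real.pi / (2 * c))
    (hbound : |ωc * ε| + μ * c ≤ Real.pi / 2)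
    (htn : tn = n * Ts + εn) (hεn : |εn| ≤ ε)
    (hk : 0 < k) (hωc : ωc = k * (2 * Real.pi / Ts)) (hTs : 0 < Ts)
    (x y : ℝ) (hx : x ∈ Set.Icc (-c) c) (hy : y ∈ Set.Icc (-c) c)
    (h : Real.sin (ωc * tn + μ * x) = Real.sin (ωc * tn + μ * y)) : x = y := by
  have hTs' : Ts ≠ 0 := ne_of_gt hTs
  have hsplit : ∀ z : ℝ, ωc * tn + μ * z = (ωc * εn + μ * z) + ((k * n : ℤ) : ℝ) * (2 * Real.pi) := by
    intro z
    rw [htn, hωc]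
    push_cast
    field_simp
    ring
  have hεnonneg : 0 ≤ ε := le_trans (abs_nonneg εn) hεn
  have harg : ∀ z : ℝ, z ∈ Set.Icc (-c) c → |ωc * εn + μ * z| ≤ Real.pi / 2 := by
    intro z hz
    have h1 : |ωc * εn| ≤ |ωc * ε| := by
      rw [abs_mul, abs_mul, abs_of_nonneg hεnonneg]
      exact mul_le_mul_of_nonneg_left hεn (abs_nonneg _)
    have h2 : |μ * z| ≤ μ * c := by
      rw [abs_mul, abs_of_pos hμ]
      exact mul_le_mul_of_nonneg_left (abs_le.mpr ⟨hz.1, hz.2⟩) hμ.le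
    calc |ωc * εn + μ * z| ≤ |ωc * εn| + |μ * z| := abs_add_le _ _
      _ ≤ |ωc * ε| + μ * c := add_le_add h1 h2
      _ ≤ Real.pi / 2 := hbound
  have hx' := harg x hx
  have hy' := harg y hy
  have hsin : Real.sin (ωc * εn + μ * x) = Real.sin (ωc * εn + μ * y) := by
    have hX := hsplit x
    have hY := hsplit y
    rw [hX, hY] at h
    rw [Real.sin_add_int_mul_two_pi, Real.sin_add_int_mul_two_pi] at h; exact h
  have := Real.injOn_sin ⟨(abs_le.mp hx').1, (abs_le.mp hx').2⟩
    ⟨(abs_le.mp hy').1, (abs_le.mp hy').2⟩ hsin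
  have : μ * x = μ * y := by linarith
  exact mul_left_cancel₀ (ne_of_gt hμ) this
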